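/- Let S̄ ⊊ {1,…,d} be a closed set. Then there exists j ∈ {1,…,d} ∖ S̄ such that S̄ ∪ {j} is closed and j belongs to the basis of S̄ ∪ {j}, i.e. ⌈S̄ ∪ {j}⌉ = S̄ ∪ {j} and j ∈ ⌊S̄ ∪ {j}⌋. -/
import Mathlib


/-- Vertex type: `some i` is the feature vertex `i`, `none` is the target vertex `Y`. -/
abbrev Vtx (d : ℕ) := Option (Fin d)

/-- `PathTo E j p` means `p` is a directed path in the graph with edge relation `E`
from the feature vertex `j` to the target vertex `Y` (encoded as `none`). -/
def PathTo {d : ℕ} (E : Vtx d → Vtx d → Prop) (j : Fin d) (p : List (Vtx d)) : Prop :=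
  p.Chain' E ∧ p.head? = some (some j) ∧ p.getLast? = some none

open Classical in
/-- The basis `⌊S⌋` of `S`: all `j ∈ S` having a directed path to `Y`
whose only vertex in `S` is `j`. -/
noncomputable def bas {d : ℕ} (E : Vtx d → Vtx d → Prop) (S : Finset (Fin d)) :
    Finset (Fin d) :=
  S.filter fun j => ∃ p : List (Vtx d), PathTo E j p ∧ ∀ i ∈ S, some i ∈ p → i = j

open Classical in
/-- The closure `⌈S⌉` of `S`: all `j ∈ {1,…,d}` such that every directed path
from `j` to `Y` contains a vertex of `S`. -/
noncomputable def clos {d : ℕ} (E : Vtx d → Vtx d → Prop) (S : Finset (Fin d)) :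
    Finset (Fin d) :=
  Finset.univ.filter fun j => ∀ p : List (Vtx d), PathTo E j p → ∃ i ∈ S, some i ∈ p

/-- Lemma 1(2): a proper closed set can be extended by one element to a closed set,
the added element belonging to the basis of the extension. -/
theorem stmt1 (d : ℕ) (E : Vtx d → Vtx d → Prop)
    (hacyc : ∀ v : Vtx d, ¬ Relation.TransGen E v v)
    (hY : ∀ v : Vtx d, ¬ E none v)
    (S : Finset (Fin d)) (hclosed : clos E S = S)
    (hproper : S ⊂ Finset.univ) :
    ∃ j : Fin d, j ∉ S ∧ clos E (insert j S) = insert j S ∧ j ∈ bas E (insert j S) := by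
  classical
  -- every vertex outside S has an S-avoiding path
  have hex : ∀ i : Fin d, i ∉ S → ∃ p, PathTo E i p ∧ ∀ x ∈ S, some x ∉ p := by
    intro i hi
    by_contra h
    push_neg at h
    apply hi
    rw [← hclosed]
    simp only [clos, Finset.mem_filter, Finset.mem_univ, true_and]
    intro p hp
    exact h p hp
  -- minimal S-avoiding path length
  set m : Fin d → ℕ := fun i =>
    sInf {n | ∃ p, (PathTo E i p ∧ ∀ x ∈ S, some x ∉ p) ∧ p.length = n} with hm
  have hmne : ∀ i : Fin d, i ∉ S →
      ({n | ∃ p, (PathTo E i p ∧ ∀ x ∈ S, some x ∉ p) ∧ p.length = n}).Nonempty := by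
    intro i hi
    obtain ⟨p, hp⟩ := hex i hi
    exact ⟨p.length, p, hp, rfl⟩
  have hcompl : (Sᶜ : Finset (Fin d)).Nonempty := by
    obtain ⟨x, _, hx⟩ := Finset.exists_of_ssubset hproper
    exact ⟨x, Finset.mem_compl.mpr hx⟩
  obtain ⟨j, hjc, hjmax⟩ := Finset.exists_max_image Sᶜ m hcompl
  have hjS : j ∉ S := Finset.mem_compl.mp hjc
  -- witness path for j
  obtain ⟨pj, hpj, hpjlen⟩ := Nat.sInf_mem (hmne j hjS)
  refine ⟨j, hjS, ?_, ?_⟩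
  · -- closure
    apply Finset.Subset.antisymm
    · intro i hi
      by_contra hiS
      have hiS' : i ∉ S := fun h => hiS (Finset.mem_insert_of_mem h)
      have hij : i ≠ j := fun h => hiS (h ▸ Finset.mem_insert_self j S)
      obtain ⟨q, hq, hqlen⟩ := Nat.sInf_mem (hmne i hiS')
      simp only [clos, Finset.mem_filter, Finset.mem_univ, true_and] at hi
      obtain ⟨x, hx, hxq⟩ := hi q hq.1
      rcases Finset.mem_insert.mp hx with rfl | hxS
      · -- q passes through j; its suffix from j is a shorter S-avoiding path
        obtain ⟨s, t, hst⟩ := List.append_of_mem hxq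
        have hchain : (some x :: t).Chain' E :=
          hq.1.1.suffix ⟨s, hst.symm⟩
        have hlast : (some x :: t).getLast? = some none := by
          have := hq.1.2.2
          rw [hst, List.getLast?_append] at this
          simpa using this
        have hpath : PathTo E x (some x :: t) := ⟨hchain, rfl, hlast⟩
        have havoid : ∀ y ∈ S, some y ∉ (some x :: t) := by
          intro y hy hmem
          exact hq.2 y hy (hst ▸ (List.mem_append.mpr (Or.inr hmem)))
        have hmle : m x ≤ (some x :: t).length :=
          Nat.sInf_le ⟨some x :: t, ⟨hpath, havoid⟩, rfl⟩
        -- s is nonempty since q's head is some i ≠ some x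
        have hs : s ≠ [] := by
          intro hnil
          have := hq.1.2.1
          rw [hst, hnil, List.nil_append] at this
          simp at this
          exact hij this.symm
        have hlt : (some x :: t).length < q.length := by
          rw [hst]
          simp only [List.length_append, List.length_cons]
          have := List.length_pos_iff.mpr hs
          omega
        have hqm : q.length = m i := hqlen
        have : m i ≤ m x := hjmax i (Finset.mem_compl.mpr hiS')
        omega
      · exact hq.2 x hxS hxq
    · intro i hi
      simp only [clos, Finset.mem_filter, Finset.mem_univ, true_and]
      intro p hp
      refine ⟨i, hi, ?_⟩
      have := hp.2.1
      cases p with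
      | nil => simp at this
      | cons a l => simp at this; simp [this]
  · -- basis
    simp only [bas, Finset.mem_filter, Finset.mem_insert_self, true_and]
    refine ⟨pj, hpj.1, ?_⟩
    intro i hi hmem
    rcases Finset.mem_insert.mp hi with rfl | hiS
    · rfl
    · exact absurd hmem (hpj.2 i hiS)
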